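/- Every nontrivially weighted 7-cycle C^7_ω is mixed. -/

import Mathlib

open MvPolynomial

/-- `(S, δ)` is a weighted vertex cover of the weighted graph `(G, w)`:
`δ` takes positive values on `S`, and every edge `{i, j}` is covered by an
endpoint lying in `S` whose weight is at most the weight of the edge. -/
def IsWVC {V : Type*} (G : SimpleGraph V) (w : Sym2 V → ℕ) (S : Finset V) (δ : V → ℕ) : Prop :=
  (∀ v ∈ S, 1 ≤ δ v) ∧
    ∀ i j, G.Adj i j → (i ∈ S ∧ δ i ≤ w s(i, j)) ∨ (j ∈ S ∧ δ j ≤ w s(i, j))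

/-- The order on weighted vertex covers: `(S', δ') ≤ (S, δ)` iff `S' ⊆ S` and
`δ v ≤ δ' v` for all `v ∈ S'`. -/
def WVCle {V : Type*} (S' : Finset V) (δ' : V → ℕ) (S : Finset V) (δ : V → ℕ) : Prop :=
  S' ⊆ S ∧ ∀ v ∈ S', δ v ≤ δ' v

/-- Minimal weighted vertex cover. -/
def IsMinWVC {V : Type*} (G : SimpleGraph V) (w : Sym2 V → ℕ) (S : Finset V) (δ : V → ℕ) :
    Prop :=
  IsWVC G w S δ ∧ ∀ T ε, IsWVC G w T ε → WVCle T ε S δ → WVCle S δ T ε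

/-- A weighted graph is unmixed if all its minimal weighted vertex covers have
the same cardinality. -/
def WUnmixed {V : Type*} (G : SimpleGraph V) (w : Sym2 V → ℕ) : Prop :=
  ∀ S δ T ε, IsMinWVC G w S δ → IsMinWVC G w T ε → S.card = T.card

/-- vertex cover of an (unweighted) graph. -/
def IsVC {V : Type*} (G : SimpleGraph V) (S : Finset V) : Prop :=
  ∀ i j, G.Adj i j → i ∈ S ∨ j ∈ S

def IsMinVC {V : Type*} (G : SimpleGraph V) (S : Finset V) : Prop :=
  IsVC G S ∧ ∀ T, IsVC G T → T ⊆ S → T = S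

def Unmixed {V : Type*} (G : SimpleGraph V) : Prop :=
  ∀ S T, IsMinVC G S → IsMinVC G T → S.card = T.card

/-- The weighted edge ideal. -/
noncomputable def wEdgeIdeal (A : Type*) [CommRing A] {V : Type*} (G : SimpleGraph V)
    (w : Sym2 V → ℕ) : Ideal (MvPolynomial V A) :=
  Ideal.span {m | ∃ i j, G.Adj i j ∧ m = X i ^ w s(i, j) * X j ^ w s(i, j)}

/-- The m-irreducible ideal `P(S, δ)` generated by the pure powers `Xᵥ^(δ v)`, `v ∈ S`. -/
noncomputable def PIdeal (A : Type*) [CommRing A] {V : Type*} (S : Finset V) (δ : V → ℕ) :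
    Ideal (MvPolynomial V A) :=
  Ideal.span {m | ∃ v ∈ S, m = X v ^ δ v}

/-- The monomial prime `P(S)` generated by the variables `Xᵥ`, `v ∈ S`. -/
noncomputable def PPrime (A : Type*) [CommRing A] {V : Type*} (S : Finset V) :
    Ideal (MvPolynomial V A) :=
  Ideal.span {m | ∃ v ∈ S, m = X v}

set_option synthInstance.maxHeartbeats 1000000 in
/-- Cohen-Macaulayness of the quotient of a polynomial ring over a field by a
(monomial, hence graded) ideal `I`: there is a regular sequence on `R ⧸ I`,
consisting of elements of the image of the irrelevant maximal ideal, whose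
length equals the Krull dimension of `R ⧸ I` (i.e. `depth = dim`). -/
def QuotIsCM (A : Type*) [Field A] {V : Type*} (I : Ideal (MvPolynomial V A)) : Prop :=
  ∃ rs : List (MvPolynomial V A ⧸ I),
    (∀ x ∈ rs, x ∈ (Ideal.span (Set.range (X : V → MvPolynomial V A))).map
      (Ideal.Quotient.mk I)) ∧
    RingTheory.Sequence.IsRegular (MvPolynomial V A ⧸ I) rs ∧
    (rs.length : WithBot (WithTop ℕ)) = ringKrullDim (MvPolynomial V A ⧸ I)

/-- The cycle graph on `Fin n`. -/
def cycleG (n : ℕ) : SimpleGraph (Fin n) := SimpleGraph.fromRel (fun i j => (j : ℕ) = ((i : ℕ) + 1) % n)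

/-- The path graph on `Fin n`, with edges `v_i v_{i+1}`. -/
def pathG (n : ℕ) : SimpleGraph (Fin n) :=
  SimpleGraph.fromRel (fun i j => (i : ℕ) + 1 = (j : ℕ))

/-- The suspension of a graph `G`, obtained by attaching a whisker `vᵢwᵢ` at
each vertex `vᵢ` of `G`; the copy `Sum.inl` carries `G` and `Sum.inr` carries
the whisker vertices. -/
def suspension {V : Type*} (G : SimpleGraph V) : SimpleGraph (V ⊕ V) :=
  SimpleGraph.fromRel (fun x y =>
    match x, y with
    | .inl i, .inl j => G.Adj i j
    | .inl i, .inr j => i = j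
    | _, _ => False)

section Stmt10Aux

private lemma cyc_adj_iff (i j : Fin 7) : (cycleG 7).Adj i j ↔ (j = i + 1 ∨ i = j + 1) := by
  simp only [cycleG, SimpleGraph.fromRel_adj]
  fin_cases i <;> fin_cases j <;> decide

private lemma adj_cases {i j : Fin 7} (h : (cycleG 7).Adj i j) :
    (i = 0 ∧ j = 1) ∨ (i = 1 ∧ j = 0) ∨ (i = 1 ∧ j = 2) ∨ (i = 2 ∧ j = 1) ∨
    (i = 2 ∧ j = 3) ∨ (i = 3 ∧ j = 2) ∨ (i = 3 ∧ j = 4) ∨ (i = 4 ∧ j = 3) ∨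
    (i = 4 ∧ j = 5) ∨ (i = 5 ∧ j = 4) ∨ (i = 5 ∧ j = 6) ∨ (i = 6 ∧ j = 5) ∨
    (i = 6 ∧ j = 0) ∨ (i = 0 ∧ j = 6) := by
  rw [cyc_adj_iff] at h
  rcases h with rfl | rfl
  · fin_cases i <;> decide
  · fin_cases j <;> decide

/-- Building block: to check `IsWVC` on the 7-cycle it suffices to check
the seven edges in their standard orientation. -/
private lemma isWVC_cycle {w : Sym2 (Fin 7) → ℕ} {S : Finset (Fin 7)} {δ : Fin 7 → ℕ}
    (hpos : ∀ v ∈ S, 1 ≤ δ v)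
    (h0 : (0 ∈ S ∧ δ 0 ≤ w s(0,1)) ∨ (1 ∈ S ∧ δ 1 ≤ w s(0,1)))
    (h1 : (1 ∈ S ∧ δ 1 ≤ w s(1,2)) ∨ (2 ∈ S ∧ δ 2 ≤ w s(1,2)))
    (h2 : (2 ∈ S ∧ δ 2 ≤ w s(2,3)) ∨ (3 ∈ S ∧ δ 3 ≤ w s(2,3)))
    (h3 : (3 ∈ S ∧ δ 3 ≤ w s(3,4)) ∨ (4 ∈ S ∧ δ 4 ≤ w s(3,4)))
    (h4 : (4 ∈ S ∧ δ 4 ≤ w s(4,5)) ∨ (5 ∈ S ∧ δ 5 ≤ w s(4,5)))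
    (h5 : (5 ∈ S ∧ δ 5 ≤ w s(5,6)) ∨ (6 ∈ S ∧ δ 6 ≤ w s(5,6)))
    (h6 : (6 ∈ S ∧ δ 6 ≤ w s(6,0)) ∨ (0 ∈ S ∧ δ 0 ≤ w s(6,0))) :
    IsWVC (cycleG 7) w S δ := by
  refine ⟨hpos, ?_⟩
  intro i j hadj
  rcases adj_cases hadj with ⟨rfl,rfl⟩|⟨rfl,rfl⟩|⟨rfl,rfl⟩|⟨rfl,rfl⟩|⟨rfl,rfl⟩|⟨rfl,rfl⟩|
    ⟨rfl,rfl⟩|⟨rfl,rfl⟩|⟨rfl,rfl⟩|⟨rfl,rfl⟩|⟨rfl,rfl⟩|⟨rfl,rfl⟩|⟨rfl,rfl⟩|⟨rfl,rfl⟩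
  · exact h0
  · rw [(Sym2.eq_swap : s((1:Fin 7),(0:Fin 7)) = s(0,1))]; exact h0.symm
  · exact h1
  · rw [(Sym2.eq_swap : s((2:Fin 7),(1:Fin 7)) = s(1,2))]; exact h1.symm
  · exact h2
  · rw [(Sym2.eq_swap : s((3:Fin 7),(2:Fin 7)) = s(2,3))]; exact h2.symm
  · exact h3
  · rw [(Sym2.eq_swap : s((4:Fin 7),(3:Fin 7)) = s(3,4))]; exact h3.symm
  · exact h4
  · rw [(Sym2.eq_swap : s((5:Fin 7),(4:Fin 7)) = s(4,5))]; exact h4.symm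
  · exact h5
  · rw [(Sym2.eq_swap : s((6:Fin 7),(5:Fin 7)) = s(5,6))]; exact h5.symm
  · exact h6
  · rw [(Sym2.eq_swap : s((0:Fin 7),(6:Fin 7)) = s(6,0))]; exact h6.symm

/-- Minimality criterion: a weighted vertex cover in which every vertex has a
"private" edge of weight exactly `δ v` is minimal. -/
private lemma minWVC_of_private {G : SimpleGraph (Fin 7)} {w : Sym2 (Fin 7) → ℕ}
    {S : Finset (Fin 7)} {δ : Fin 7 → ℕ} (h : IsWVC G w S δ)
    (hp : ∀ v ∈ S, ∃ u, G.Adj v u ∧ (u ∉ S ∨ w s(v, u) < δ u) ∧ w s(v, u) = δ v) :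
    IsMinWVC G w S δ := by
  refine ⟨h, fun T ε hT hle => ?_⟩
  have key : ∀ v ∈ S, v ∈ T ∧ ε v ≤ δ v := by
    intro v hv
    obtain ⟨u, hadj, hfail, hwt⟩ := hp v hv
    rcases hT.2 v u hadj with ⟨h1, h2⟩ | ⟨h1, h2⟩
    · exact ⟨h1, hwt ▸ h2⟩
    · exfalso
      rcases hfail with hns | hlt
      · exact hns (hle.1 h1)
      · exact absurd (le_trans (hle.2 u h1) h2) (not_le.2 hlt)
  exact ⟨fun v hv => (key v hv).1, fun v hv => (key v hv).2⟩

/-- Transport of minimal weighted vertex covers along a vertex permutation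
preserving adjacency. -/
private lemma transport_minWVC {G : SimpleGraph (Fin 7)} (σ : Equiv.Perm (Fin 7))
    (hσ : ∀ i j, G.Adj i j ↔ G.Adj (σ i) (σ j)) (w : Sym2 (Fin 7) → ℕ)
    {S : Finset (Fin 7)} {δ : Fin 7 → ℕ}
    (h : IsMinWVC G (fun e => w (Sym2.map σ e)) S δ) :
    IsMinWVC G w (S.image σ) (fun v => δ (σ.symm v)) := by
  have hmap : ∀ i j : Fin 7, w (Sym2.map σ s(i, j)) = w s(σ i, σ j) := by
    intro i j; rw [Sym2.map_pair_eq]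
  constructor
  · constructor
    · intro v hv
      obtain ⟨u, hu, rfl⟩ := Finset.mem_image.1 hv
      simpa using h.1.1 u hu
    · intro i j hadj
      have hadj' : G.Adj (σ.symm i) (σ.symm j) := by
        rw [hσ (σ.symm i) (σ.symm j), Equiv.apply_symm_apply, Equiv.apply_symm_apply]
        exact hadj
      rcases h.1.2 _ _ hadj' with ⟨h1, h2⟩ | ⟨h1, h2⟩
      · left
        refine ⟨Finset.mem_image.2 ⟨_, h1, Equiv.apply_symm_apply σ i⟩, ?_⟩
        simp only [hmap, Equiv.apply_symm_apply] at h2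
        exact h2
      · right
        refine ⟨Finset.mem_image.2 ⟨_, h1, Equiv.apply_symm_apply σ j⟩, ?_⟩
        simp only [hmap, Equiv.apply_symm_apply] at h2
        exact h2
  · intro T ε hT hle
    have hT'cov : IsWVC G (fun e => w (Sym2.map σ e)) (T.image σ.symm) (fun v => ε (σ v)) := by
      constructor
      · intro v hv
        obtain ⟨u, hu, rfl⟩ := Finset.mem_image.1 hv
        simpa using hT.1 u hu
      · intro i j hadj
        have hadj2 := (hσ i j).1 hadj
        rcases hT.2 _ _ hadj2 with ⟨h1, h2⟩ | ⟨h1, h2⟩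
        · left
          exact ⟨Finset.mem_image.2 ⟨_, h1, by simp⟩, by simpa only [hmap] using h2⟩
        · right
          exact ⟨Finset.mem_image.2 ⟨_, h1, by simp⟩, by simpa only [hmap] using h2⟩
    have hle' : WVCle (T.image σ.symm) (fun v => ε (σ v)) S δ := by
      constructor
      · intro t ht
        obtain ⟨u, hu, rfl⟩ := Finset.mem_image.1 ht
        obtain ⟨v, hv, hvu⟩ := Finset.mem_image.1 (hle.1 hu)
        rw [← hvu]; simpa using hv
      · intro t ht
        obtain ⟨u, hu, rfl⟩ := Finset.mem_image.1 ht
        simpa using hle.2 u hu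
    have hres := h.2 _ _ hT'cov hle'
    constructor
    · intro x hx
      obtain ⟨v, hv, rfl⟩ := Finset.mem_image.1 hx
      obtain ⟨u, hu, huv⟩ := Finset.mem_image.1 (hres.1 hv)
      rw [← huv]; simpa using hu
    · intro x hx
      obtain ⟨v, hv, rfl⟩ := Finset.mem_image.1 hx
      simpa using hres.2 v hv


section Stmt10Templates

private lemma five_T2 (w : Sym2 (Fin 7) → ℕ)
    (p0 : 1 ≤ w s(0,1)) (p1 : 1 ≤ w s(1,2)) (p2 : 1 ≤ w s(2,3))
    (p4 : 1 ≤ w s(4,5)) (p5 : 1 ≤ w s(5,6))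
    (hag : w s(0,1) ≤ w s(6,0)) (hab : w s(0,1) < w s(1,2)) (hed : w s(4,5) ≤ w s(3,4)) :
    ∃ S δ, IsMinWVC (cycleG 7) w S δ ∧ S.card = 5 := by
  refine ⟨{0,1,3,4,6}, (fun v => if v = 0 then w s(0,1) else if v = 1 then w s(1,2)
    else if v = 3 then w s(2,3) else if v = 4 then w s(4,5) else w s(5,6)), ?_, by decide⟩
  refine minWVC_of_private (isWVC_cycle ?_ ?_ ?_ ?_ ?_ ?_ ?_ ?_) ?_
  · intro v _; fin_cases v <;> simp <;> omega
  · exact Or.inl ⟨by decide, by simp⟩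
  · exact Or.inl ⟨by decide, by simp⟩
  · exact Or.inr ⟨by decide, by simp⟩
  · exact Or.inr ⟨by decide, by simp <;> omega⟩
  · exact Or.inl ⟨by decide, by simp⟩
  · exact Or.inr ⟨by decide, by simp⟩
  · exact Or.inr ⟨by decide, by simp <;> omega⟩
  · intro v hv
    fin_cases v
    · exact ⟨1, (cyc_adj_iff 0 1).mpr (by decide), Or.inr (by simp <;> omega), by simp⟩
    · exact ⟨2, (cyc_adj_iff 1 2).mpr (by decide), Or.inl (by decide), by simp⟩
    · exact absurd hv (by decide)
    · exact ⟨2, (cyc_adj_iff 3 2).mpr (by decide), Or.inl (by decide),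
        by rw [Sym2.eq_swap]; simp⟩
    · exact ⟨5, (cyc_adj_iff 4 5).mpr (by decide), Or.inl (by decide), by simp⟩
    · exact absurd hv (by decide)
    · exact ⟨5, (cyc_adj_iff 6 5).mpr (by decide), Or.inl (by decide),
        by rw [Sym2.eq_swap]; simp⟩

private lemma five_T1a (w : Sym2 (Fin 7) → ℕ)
    (p0 : 1 ≤ w s(0,1)) (p1 : 1 ≤ w s(1,2)) (p3 : 1 ≤ w s(3,4))
    (p4 : 1 ≤ w s(4,5)) (p5 : 1 ≤ w s(5,6))
    (hag : w s(0,1) ≤ w s(6,0)) (hbc : w s(1,2) ≤ w s(2,3)) (hde : w s(3,4) < w s(4,5)) :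
    ∃ S δ, IsMinWVC (cycleG 7) w S δ ∧ S.card = 5 := by
  refine ⟨{0,2,3,4,6}, (fun v => if v = 0 then w s(0,1) else if v = 2 then w s(1,2)
    else if v = 3 then w s(3,4) else if v = 4 then w s(4,5) else w s(5,6)), ?_, by decide⟩
  refine minWVC_of_private (isWVC_cycle ?_ ?_ ?_ ?_ ?_ ?_ ?_ ?_) ?_
  · intro v _; fin_cases v <;> simp <;> omega
  · exact Or.inl ⟨by decide, by simp⟩
  · exact Or.inr ⟨by decide, by simp⟩
  · exact Or.inl ⟨by decide, by simp <;> omega⟩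
  · exact Or.inl ⟨by decide, by simp⟩
  · exact Or.inl ⟨by decide, by simp⟩
  · exact Or.inr ⟨by decide, by simp⟩
  · exact Or.inr ⟨by decide, by simp <;> omega⟩
  · intro v hv
    fin_cases v
    · exact ⟨1, (cyc_adj_iff 0 1).mpr (by decide), Or.inl (by decide), by simp⟩
    · exact absurd hv (by decide)
    · exact ⟨1, (cyc_adj_iff 2 1).mpr (by decide), Or.inl (by decide),
        by rw [Sym2.eq_swap]; simp⟩
    · exact ⟨4, (cyc_adj_iff 3 4).mpr (by decide), Or.inr (by simp <;> omega), by simp⟩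
    · exact ⟨5, (cyc_adj_iff 4 5).mpr (by decide), Or.inl (by decide), by simp⟩
    · exact absurd hv (by decide)
    · exact ⟨5, (cyc_adj_iff 6 5).mpr (by decide), Or.inl (by decide),
        by rw [Sym2.eq_swap]; simp⟩

private lemma five_T1b1 (w : Sym2 (Fin 7) → ℕ)
    (p0 : 1 ≤ w s(0,1)) (p1 : 1 ≤ w s(1,2)) (p2 : 1 ≤ w s(2,3))
    (p3 : 1 ≤ w s(3,4)) (p5 : 1 ≤ w s(5,6))
    (hag : w s(0,1) ≤ w s(6,0)) (hcb : w s(2,3) < w s(1,2))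
    (hdc : w s(3,4) < w s(2,3)) (hde : w s(3,4) < w s(4,5)) :
    ∃ S δ, IsMinWVC (cycleG 7) w S δ ∧ S.card = 5 := by
  refine ⟨{0,2,3,4,6}, (fun v => if v = 0 then w s(0,1) else if v = 2 then w s(1,2)
    else if v = 3 then w s(2,3) else if v = 4 then w s(3,4) else w s(5,6)), ?_, by decide⟩
  refine minWVC_of_private (isWVC_cycle ?_ ?_ ?_ ?_ ?_ ?_ ?_ ?_) ?_
  · intro v _; fin_cases v <;> simp <;> omega
  · exact Or.inl ⟨by decide, by simp⟩
  · exact Or.inr ⟨by decide, by simp⟩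
  · exact Or.inr ⟨by decide, by simp⟩
  · exact Or.inr ⟨by decide, by simp⟩
  · exact Or.inl ⟨by decide, by simp <;> omega⟩
  · exact Or.inr ⟨by decide, by simp⟩
  · exact Or.inr ⟨by decide, by simp <;> omega⟩
  · intro v hv
    fin_cases v
    · exact ⟨1, (cyc_adj_iff 0 1).mpr (by decide), Or.inl (by decide), by simp⟩
    · exact absurd hv (by decide)
    · exact ⟨1, (cyc_adj_iff 2 1).mpr (by decide), Or.inl (by decide),
        by rw [Sym2.eq_swap]; simp⟩
    · exact ⟨2, (cyc_adj_iff 3 2).mpr (by decide),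
        Or.inr (by rw [Sym2.eq_swap]; simp <;> omega),
        by rw [Sym2.eq_swap]; simp⟩
    · exact ⟨3, (cyc_adj_iff 4 3).mpr (by decide),
        Or.inr (by rw [Sym2.eq_swap]; simp <;> omega),
        by rw [Sym2.eq_swap]; simp⟩
    · exact absurd hv (by decide)
    · exact ⟨5, (cyc_adj_iff 6 5).mpr (by decide), Or.inl (by decide),
        by rw [Sym2.eq_swap]; simp⟩

private lemma five_T1b2 (w : Sym2 (Fin 7) → ℕ)
    (p0 : 1 ≤ w s(0,1)) (p1 : 1 ≤ w s(1,2)) (p2 : 1 ≤ w s(2,3))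
    (p4 : 1 ≤ w s(4,5)) (p5 : 1 ≤ w s(5,6))
    (hag : w s(0,1) ≤ w s(6,0)) (hcb : w s(2,3) < w s(1,2)) (hcd : w s(2,3) ≤ w s(3,4)) :
    ∃ S δ, IsMinWVC (cycleG 7) w S δ ∧ S.card = 5 := by
  refine ⟨{0,2,3,4,6}, (fun v => if v = 0 then w s(0,1) else if v = 2 then w s(1,2)
    else if v = 3 then w s(2,3) else if v = 4 then w s(4,5) else w s(5,6)), ?_, by decide⟩
  refine minWVC_of_private (isWVC_cycle ?_ ?_ ?_ ?_ ?_ ?_ ?_ ?_) ?_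
  · intro v _; fin_cases v <;> simp <;> omega
  · exact Or.inl ⟨by decide, by simp⟩
  · exact Or.inr ⟨by decide, by simp⟩
  · exact Or.inr ⟨by decide, by simp⟩
  · exact Or.inl ⟨by decide, by simp <;> omega⟩
  · exact Or.inl ⟨by decide, by simp⟩
  · exact Or.inr ⟨by decide, by simp⟩
  · exact Or.inr ⟨by decide, by simp <;> omega⟩
  · intro v hv
    fin_cases v
    · exact ⟨1, (cyc_adj_iff 0 1).mpr (by decide), Or.inl (by decide), by simp⟩
    · exact absurd hv (by decide)
    · exact ⟨1, (cyc_adj_iff 2 1).mpr (by decide), Or.inl (by decide),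
        by rw [Sym2.eq_swap]; simp⟩
    · exact ⟨2, (cyc_adj_iff 3 2).mpr (by decide),
        Or.inr (by rw [Sym2.eq_swap]; simp <;> omega),
        by rw [Sym2.eq_swap]; simp⟩
    · exact ⟨5, (cyc_adj_iff 4 5).mpr (by decide), Or.inl (by decide), by simp⟩
    · exact absurd hv (by decide)
    · exact ⟨5, (cyc_adj_iff 6 5).mpr (by decide), Or.inl (by decide),
        by rw [Sym2.eq_swap]; simp⟩

private lemma five_min (w : Sym2 (Fin 7) → ℕ) (p : ∀ k : Fin 7, 1 ≤ w s(k, k+1))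
    (hmin : ∀ k : Fin 7, w s(0,1) ≤ w s(k, k+1)) (hab : w s(0,1) < w s(1,2)) :
    ∃ S δ, IsMinWVC (cycleG 7) w S δ ∧ S.card = 5 := by
  have p0 : 1 ≤ w s(0,1) := p 0
  have p1 : 1 ≤ w s(1,2) := p 1
  have p2 : 1 ≤ w s(2,3) := p 2
  have p3 : 1 ≤ w s(3,4) := p 3
  have p4 : 1 ≤ w s(4,5) := p 4
  have p5 : 1 ≤ w s(5,6) := p 5
  have hag : w s(0,1) ≤ w s(6,0) := hmin 6
  by_cases hed : w s(4,5) ≤ w s(3,4)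
  · exact five_T2 w p0 p1 p2 p4 p5 hag hab hed
  · have hde : w s(3,4) < w s(4,5) := by omega
    by_cases hbc : w s(1,2) ≤ w s(2,3)
    · exact five_T1a w p0 p1 p3 p4 p5 hag hbc hde
    · have hcb : w s(2,3) < w s(1,2) := by omega
      by_cases hdc : w s(3,4) < w s(2,3)
      · exact five_T1b1 w p0 p1 p2 p3 p5 hag hcb hdc hde
      · have hcd : w s(2,3) ≤ w s(3,4) := by omega
        exact five_T1b2 w p0 p1 p2 p4 p5 hag hcb hcd

private lemma four_F1 (w : Sym2 (Fin 7) → ℕ)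
    (p0 : 1 ≤ w s(0,1)) (p1 : 1 ≤ w s(1,2)) (p2 : 1 ≤ w s(2,3))
    (p3 : 1 ≤ w s(3,4)) (p4 : 1 ≤ w s(4,5)) (p5 : 1 ≤ w s(5,6))
    (hor : w s(0,1) ≤ w s(6,0) ∨ w s(5,6) ≤ w s(6,0)) :
    ∃ S δ, IsMinWVC (cycleG 7) w S δ ∧ S.card = 4 := by
  refine ⟨{0,2,4,6}, (fun v => if v = 0 then w s(0,1) else if v = 2 then min (w s(1,2)) (w s(2,3))
    else if v = 4 then min (w s(3,4)) (w s(4,5)) else w s(5,6)), ?_, by decide⟩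
  refine minWVC_of_private (isWVC_cycle ?_ ?_ ?_ ?_ ?_ ?_ ?_ ?_) ?_
  · intro v _; fin_cases v <;> simp <;> omega
  · exact Or.inl ⟨by decide, by simp⟩
  · exact Or.inr ⟨by decide, by simp <;> omega⟩
  · exact Or.inl ⟨by decide, by simp <;> omega⟩
  · exact Or.inr ⟨by decide, by simp <;> omega⟩
  · exact Or.inl ⟨by decide, by simp <;> omega⟩
  · exact Or.inr ⟨by decide, by simp⟩
  · rcases hor with h | h
    · exact Or.inr ⟨by decide, by simp <;> omega⟩
    · exact Or.inl ⟨by decide, by simp <;> omega⟩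
  · intro v hv
    fin_cases v
    · exact ⟨1, (cyc_adj_iff 0 1).mpr (by decide), Or.inl (by decide), by simp⟩
    · exact absurd hv (by decide)
    · by_cases hbc : w s(1,2) ≤ w s(2,3)
      · exact ⟨1, (cyc_adj_iff 2 1).mpr (by decide), Or.inl (by decide),
          by rw [Sym2.eq_swap]; simp <;> omega⟩
      · exact ⟨3, (cyc_adj_iff 2 3).mpr (by decide), Or.inl (by decide), by simp <;> omega⟩
    · exact absurd hv (by decide)
    · by_cases hde : w s(3,4) ≤ w s(4,5)
      · exact ⟨3, (cyc_adj_iff 4 3).mpr (by decide), Or.inl (by decide),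
          by rw [Sym2.eq_swap]; simp <;> omega⟩
      · exact ⟨5, (cyc_adj_iff 4 5).mpr (by decide), Or.inl (by decide), by simp <;> omega⟩
    · exact absurd hv (by decide)
    · exact ⟨5, (cyc_adj_iff 6 5).mpr (by decide), Or.inl (by decide),
        by rw [Sym2.eq_swap]; simp⟩

private lemma four_F2 (w : Sym2 (Fin 7) → ℕ)
    (p0 : 1 ≤ w s(0,1)) (p1 : 1 ≤ w s(1,2)) (p2 : 1 ≤ w s(2,3))
    (p3 : 1 ≤ w s(3,4)) (p4 : 1 ≤ w s(4,5)) (p6 : 1 ≤ w s(6,0))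
    (hga : w s(6,0) < w s(0,1)) (hgf : w s(6,0) < w s(5,6)) :
    ∃ S δ, IsMinWVC (cycleG 7) w S δ ∧ S.card = 4 := by
  refine ⟨{0,2,4,6}, (fun v => if v = 0 then w s(0,1) else if v = 2 then min (w s(1,2)) (w s(2,3))
    else if v = 4 then min (w s(3,4)) (w s(4,5)) else w s(6,0)), ?_, by decide⟩
  refine minWVC_of_private (isWVC_cycle ?_ ?_ ?_ ?_ ?_ ?_ ?_ ?_) ?_
  · intro v _; fin_cases v <;> simp <;> omega
  · exact Or.inl ⟨by decide, by simp⟩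
  · exact Or.inr ⟨by decide, by simp <;> omega⟩
  · exact Or.inl ⟨by decide, by simp <;> omega⟩
  · exact Or.inr ⟨by decide, by simp <;> omega⟩
  · exact Or.inl ⟨by decide, by simp <;> omega⟩
  · exact Or.inr ⟨by decide, by simp <;> omega⟩
  · exact Or.inl ⟨by decide, by simp⟩
  · intro v hv
    fin_cases v
    · exact ⟨1, (cyc_adj_iff 0 1).mpr (by decide), Or.inl (by decide), by simp⟩
    · exact absurd hv (by decide)
    · by_cases hbc : w s(1,2) ≤ w s(2,3)
      · exact ⟨1, (cyc_adj_iff 2 1).mpr (by decide), Or.inl (by decide),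
          by rw [Sym2.eq_swap]; simp <;> omega⟩
      · exact ⟨3, (cyc_adj_iff 2 3).mpr (by decide), Or.inl (by decide), by simp <;> omega⟩
    · exact absurd hv (by decide)
    · by_cases hde : w s(3,4) ≤ w s(4,5)
      · exact ⟨3, (cyc_adj_iff 4 3).mpr (by decide), Or.inl (by decide),
          by rw [Sym2.eq_swap]; simp <;> omega⟩
      · exact ⟨5, (cyc_adj_iff 4 5).mpr (by decide), Or.inl (by decide), by simp <;> omega⟩
    · exact absurd hv (by decide)
    · exact ⟨0, (cyc_adj_iff 6 0).mpr (by decide), Or.inr (by simp <;> omega), by simp⟩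

private lemma four_min (w : Sym2 (Fin 7) → ℕ) (p : ∀ k : Fin 7, 1 ≤ w s(k, k+1)) :
    ∃ S δ, IsMinWVC (cycleG 7) w S δ ∧ S.card = 4 := by
  have p0 : 1 ≤ w s(0,1) := p 0
  have p1 : 1 ≤ w s(1,2) := p 1
  have p2 : 1 ≤ w s(2,3) := p 2
  have p3 : 1 ≤ w s(3,4) := p 3
  have p4 : 1 ≤ w s(4,5) := p 4
  have p5 : 1 ≤ w s(5,6) := p 5
  have p6 : 1 ≤ w s(6,0) := p 6
  by_cases hg : w s(6,0) < w s(0,1) ∧ w s(6,0) < w s(5,6)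
  · exact four_F2 w p0 p1 p2 p3 p4 p6 hg.1 hg.2
  · have hor : w s(0,1) ≤ w s(6,0) ∨ w s(5,6) ≤ w s(6,0) := by
      rcases not_and_or.1 hg with h | h
      · exact Or.inl (not_lt.1 h)
      · exact Or.inr (not_lt.1 h)
    exact four_F1 w p0 p1 p2 p3 p4 p5 hor

end Stmt10Templates

end Stmt10Aux

/-- every nontrivially weighted 7-cycle is mixed. -/
theorem stmt_10 (w : Sym2 (Fin 7) → ℕ) (hw : ∀ e ∈ (cycleG 7).edgeSet, 1 ≤ w e)
    (hnt : ¬ ∀ e ∈ (cycleG 7).edgeSet, ∀ e' ∈ (cycleG 7).edgeSet, w e = w e') :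
    ¬ WUnmixed (cycleG 7) w := by
  intro hU
  have hadjk : ∀ k : Fin 7, (cycleG 7).Adj k (k+1) := fun k => (cyc_adj_iff k (k+1)).mpr (Or.inl rfl)
  have p : ∀ k : Fin 7, 1 ≤ w s(k, k+1) :=
    fun k => hw _ ((cycleG 7).mem_edgeSet.mpr (hadjk k))
  push_neg at hnt
  obtain ⟨e1, he1, e2, he2, hne⟩ := hnt
  have edge_form : ∀ e ∈ (cycleG 7).edgeSet, ∃ k : Fin 7, e = s(k, k+1) := by
    intro e he
    induction e using Sym2.ind with
    | _ i j =>
      rw [SimpleGraph.mem_edgeSet, cyc_adj_iff] at he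
      rcases he with rfl | rfl
      · exact ⟨i, rfl⟩
      · exact ⟨j, Sym2.eq_swap⟩
  obtain ⟨k1, rfl⟩ := edge_form e1 he1
  obtain ⟨k2, rfl⟩ := edge_form e2 he2
  obtain ⟨k0, -, hk0⟩ := Finset.exists_min_image (Finset.univ : Finset (Fin 7))
    (fun k => w s(k, k+1)) ⟨0, Finset.mem_univ 0⟩
  have hk0' : ∀ k : Fin 7, w s(k0, k0+1) ≤ w s(k, k+1) := fun k => hk0 k (Finset.mem_univ k)
  -- find a minimal-weight edge followed by a strictly heavier edge
  have hex : ∃ k : Fin 7, w s(k, k+1) = w s(k0, k0+1) ∧ w s(k, k+1) < w s(k+1, k+1+1) := by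
    by_contra hno
    push_neg at hno
    have step : ∀ k : Fin 7, w s(k, k+1) = w s(k0, k0+1) → w s(k+1, k+1+1) = w s(k0, k0+1) := by
      intro k hk
      have h1 := hno k hk
      rw [hk] at h1
      exact le_antisymm h1 (hk0' (k+1))
    have h1 := step k0 rfl
    have h2 := step _ h1
    have h3 := step _ h2
    have h4 := step _ h3
    have h5 := step _ h4
    have h6 := step _ h5
    have hall : ∀ k : Fin 7, w s(k, k+1) = w s(k0, k0+1) := by
      intro k
      obtain ⟨t, rfl⟩ : ∃ t : Fin 7, k = k0 + t := ⟨k - k0, by rw [add_comm, sub_add_cancel]⟩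
      fin_cases t
      · show w s(k0 + 0, k0 + 0 + 1) = _
        rw [show k0 + (0:Fin 7) = k0 from by (open Fin.CommRing in ring)]
      · show w s(k0 + 1, k0 + 1 + 1) = _
        exact h1
      · show w s(k0 + 2, k0 + 2 + 1) = _
        rw [show k0 + (2:Fin 7) = k0 + 1 + 1 from by (open Fin.CommRing in ring)]; exact h2
      · show w s(k0 + 3, k0 + 3 + 1) = _
        rw [show k0 + (3:Fin 7) = k0 + 1 + 1 + 1 from by (open Fin.CommRing in ring)]; exact h3
      · show w s(k0 + 4, k0 + 4 + 1) = _
        rw [show k0 + (4:Fin 7) = k0 + 1 + 1 + 1 + 1 from by (open Fin.CommRing in ring)]; exact h4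
      · show w s(k0 + 5, k0 + 5 + 1) = _
        rw [show k0 + (5:Fin 7) = k0 + 1 + 1 + 1 + 1 + 1 from by (open Fin.CommRing in ring)]; exact h5
      · show w s(k0 + 6, k0 + 6 + 1) = _
        rw [show k0 + (6:Fin 7) = k0 + 1 + 1 + 1 + 1 + 1 + 1 from by (open Fin.CommRing in ring)]; exact h6
    exact hne (by rw [hall k1, hall k2])
  obtain ⟨k, hkm, hklt⟩ := hex
  have hkmin : ∀ j : Fin 7, w s(k, k+1) ≤ w s(j, j+1) := fun j => hkm ▸ hk0' j
  -- rotate by k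
  set σ : Equiv.Perm (Fin 7) := Equiv.addRight k with hσdef
  have hσapp : ∀ v : Fin 7, σ v = v + k := fun v => rfl
  have hσadj : ∀ i j : Fin 7, (cycleG 7).Adj i j ↔ (cycleG 7).Adj (σ i) (σ j) := by
    intro i j
    rw [cyc_adj_iff, cyc_adj_iff, hσapp, hσapp]
    constructor
    · rintro (rfl | rfl)
      · left; (open Fin.CommRing in ring)
      · right; (open Fin.CommRing in ring)
    · rintro (h | h)
      · left
        have h' : j + k = (i + 1) + k := by rw [h]; (open Fin.CommRing in ring)
        exact add_right_cancel h'
      · right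
        have h' : i + k = (j + 1) + k := by rw [h]; (open Fin.CommRing in ring)
        exact add_right_cancel h'
  set w' : Sym2 (Fin 7) → ℕ := fun e => w (Sym2.map σ e) with hw'def
  have hw'pair : ∀ i j : Fin 7, w' s(i, j) = w s(i + k, j + k) := by
    intro i j
    rw [hw'def]
    simp only [Sym2.map_pair_eq]
    rw [hσapp, hσapp]
  have hp' : ∀ t : Fin 7, 1 ≤ w' s(t, t+1) := by
    intro t
    rw [hw'pair, show t + 1 + k = (t + k) + 1 from by (open Fin.CommRing in ring)]
    exact p (t + k)
  have hmin' : ∀ t : Fin 7, w' s(0,1) ≤ w' s(t, t+1) := by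
    intro t
    rw [hw'pair, hw'pair, show (0:Fin 7) + k = k from by (open Fin.CommRing in ring),
      show (1:Fin 7) + k = k + 1 from by (open Fin.CommRing in ring), show t + 1 + k = (t + k) + 1 from by (open Fin.CommRing in ring)]
    exact hkmin (t + k)
  have hab' : w' s(0,1) < w' s(1,2) := by
    rw [hw'pair, hw'pair, show (0:Fin 7) + k = k from by (open Fin.CommRing in ring),
      show (1:Fin 7) + k = k + 1 from by (open Fin.CommRing in ring), show (2:Fin 7) + k = (k + 1) + 1 from by (open Fin.CommRing in ring)]
    exact hklt
  obtain ⟨S5, δ5, hmin5, hcard5⟩ := five_min w' hp' hmin' hab'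
  have h5' := transport_minWVC σ hσadj w hmin5
  obtain ⟨S4, δ4, hmin4, hcard4⟩ := four_min w p
  have hcards := hU _ _ _ _ hmin4 h5'
  rw [hcard4, Finset.card_image_of_injective _ σ.injective, hcard5] at hcards
  exact absurd hcards (by decide)
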